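/- For every pair (f₁,f₂) ∈ ℂ[x,y]² satisfying x²·∂_x f₁ + x·∂_y f₂ − x·f₁ = 0, there exist a polynomial g ∈ ℂ[x,y] and a unique triple consisting of a one-variable polynomial p and constants a₀, a₁ ∈ ℂ such that f₁ = x·∂_y g + p(y) and f₂ = −x²·∂_x g + P(y) + a₀ + a₁·x, where P is the antiderivative of p with zero constant term; hence the first logarithmic Poisson cohomology space H¹_PS of the Poisson bracket {x,y} = x² on ℂ[x,y] is isomorphic to ℂ[y] ⊕ ℂ₁[x]. -/

import Mathlib

open MvPolynomial

/-- `ℂ[x,y]`, with `X 0 = x`, `X 1 = y`. -/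
abbrev A : Type := MvPolynomial (Fin 2) ℂ
noncomputable def Dm (i j : ℕ) : Fin 2 →₀ ℕ := Finsupp.single 0 i + Finsupp.single 1 j
lemma Dm_apply0 (i j : ℕ) : Dm i j 0 = i := by simp [Dm, Finsupp.single_apply]
lemma Dm_apply1 (i j : ℕ) : Dm i j 1 = j := by simp [Dm, Finsupp.single_apply]
lemma eq_Dm (m : Fin 2 →₀ ℕ) : m = Dm (m 0) (m 1) := by
  ext x; fin_cases x <;> simp [Dm, Finsupp.single_apply]
lemma Dm_inj {i j i' j' : ℕ} : Dm i j = Dm i' j' ↔ i = i' ∧ j = j' := by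
  constructor
  · intro h
    exact ⟨by simpa [Dm_apply0] using congrArg (fun m => m 0) h,
      by simpa [Dm_apply1] using congrArg (fun m => m 1) h⟩
  · rintro ⟨rfl, rfl⟩; rfl

lemma sum_support_eq {M : Type*} [AddCommMonoid M] (f : A) (m₀ : Fin 2 →₀ ℕ)
    (F : (Fin 2 →₀ ℕ) → M) (h0 : coeff m₀ f = 0 → F m₀ = 0) :
    (∑ m ∈ f.support, if m = m₀ then F m else 0) = F m₀ := by
  classical
  rw [Finset.sum_ite_eq' f.support m₀ F]
  split_ifs with h
  · rfl
  · exact (h0 (by rwa [MvPolynomial.mem_support_iff, not_not] at h)).symm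

noncomputable def pOf (f : A) : Polynomial ℂ :=
  ∑ m ∈ f.support, if m 0 = 0 then Polynomial.monomial (m 1) (coeff m f) else 0

noncomputable def POf (f : A) : Polynomial ℂ :=
  ∑ m ∈ f.support, if m 0 = 0 ∧ m 1 ≠ 0 then Polynomial.monomial (m 1) (coeff m f) else 0

noncomputable def gOf (f₁ f₂ : A) : A :=
  (∑ m ∈ f₁.support,
    if m 0 = 1 then monomial (Dm 0 (m 1 + 1)) (coeff m f₁ / ((m 1 + 1 : ℕ) : ℂ)) else 0)
  + ∑ m ∈ f₂.support,
    if 2 ≤ m 0 then monomial (Dm (m 0 - 1) (m 1)) (coeff m f₂ / (1 - ((m 0 : ℕ) : ℂ))) else 0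

lemma pOf_coeff (f : A) (j : ℕ) : (pOf f).coeff j = coeff (Dm 0 j) f := by
  classical
  rw [pOf, Polynomial.finset_sum_coeff]
  have : ∀ m ∈ f.support,
      (if m 0 = 0 then Polynomial.monomial (m 1) (coeff m f) else 0).coeff j
        = if m = Dm 0 j then coeff m f else 0 := by
    intro m _
    by_cases h : m = Dm 0 j
    · subst h; simp [Dm_apply0, Dm_apply1]
    · rw [if_neg h]
      by_cases h0 : m 0 = 0
      · rw [if_pos h0, Polynomial.coeff_monomial, if_neg]
        intro h1
        exact h (by rw [eq_Dm m, h0, h1])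
      · rw [if_neg h0, Polynomial.coeff_zero]
  rw [Finset.sum_congr rfl this, sum_support_eq f (Dm 0 j) (fun m => coeff m f) (fun h => h)]

lemma POf_coeff (f : A) (j : ℕ) :
    (POf f).coeff j = if j = 0 then 0 else coeff (Dm 0 j) f := by
  classical
  rw [POf, Polynomial.finset_sum_coeff]
  by_cases hj : j = 0
  · subst hj
    rw [if_pos rfl]
    apply Finset.sum_eq_zero
    intro m _
    split_ifs with h
    · rw [Polynomial.coeff_monomial, if_neg (by omega)]
    · simp
  · rw [if_neg hj]
    have : ∀ m ∈ f.support,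
        (if m 0 = 0 ∧ m 1 ≠ 0 then Polynomial.monomial (m 1) (coeff m f) else 0).coeff j
          = if m = Dm 0 j then coeff m f else 0 := by
      intro m _
      by_cases h : m = Dm 0 j
      · subst h
        rw [if_pos ⟨Dm_apply0 0 j, by rw [Dm_apply1]; exact hj⟩, Polynomial.coeff_monomial,
          if_pos (Dm_apply1 0 j), if_pos rfl]
      · rw [if_neg h]
        by_cases h0 : m 0 = 0 ∧ m 1 ≠ 0
        · rw [if_pos h0, Polynomial.coeff_monomial, if_neg]
          intro h1
          exact h (by rw [eq_Dm m, h0.1, h1])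
        · rw [if_neg h0, Polynomial.coeff_zero]
    rw [Finset.sum_congr rfl this, sum_support_eq f (Dm 0 j) (fun m => coeff m f) (fun h => h)]

lemma gOf_coeff00 (f₁ f₂ : A) : coeff (Dm 0 0) (gOf f₁ f₂) = 0 := by
  classical
  rw [gOf, coeff_add, MvPolynomial.coeff_sum, MvPolynomial.coeff_sum]
  rw [Finset.sum_eq_zero, Finset.sum_eq_zero, add_zero]
  · intro m _
    split_ifs with h
    · rw [coeff_monomial, if_neg (by rw [Dm_inj]; omega)]
    · simp
  · intro m _
    split_ifs with h
    · rw [coeff_monomial, if_neg (by rw [Dm_inj]; omega)]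
    · simp

lemma gOf_coeff0 (f₁ f₂ : A) (j : ℕ) :
    coeff (Dm 0 (j + 1)) (gOf f₁ f₂) = coeff (Dm 1 j) f₁ / ((j + 1 : ℕ) : ℂ) := by
  classical
  rw [gOf, coeff_add, MvPolynomial.coeff_sum, MvPolynomial.coeff_sum]
  rw [show (∑ m ∈ f₂.support, coeff (Dm 0 (j+1))
      (if 2 ≤ m 0 then monomial (Dm (m 0 - 1) (m 1)) (coeff m f₂ / (1 - ((m 0 : ℕ) : ℂ))) else 0)) = 0
    from Finset.sum_eq_zero fun m _ => by
      split_ifs with h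
      · rw [coeff_monomial, if_neg (by rw [Dm_inj]; omega)]
      · simp, add_zero]
  have : ∀ m ∈ f₁.support,
      coeff (Dm 0 (j+1)) (if m 0 = 1 then monomial (Dm 0 (m 1 + 1)) (coeff m f₁ / ((m 1 + 1 : ℕ) : ℂ)) else 0)
        = if m = Dm 1 j then coeff m f₁ / ((j + 1 : ℕ) : ℂ) else 0 := by
    intro m _
    by_cases h : m = Dm 1 j
    · subst h
      rw [if_pos (Dm_apply0 1 j), coeff_monomial, if_pos (by rw [Dm_inj, Dm_apply1]; omega),
        if_pos rfl, Dm_apply1]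
    · rw [if_neg h]
      by_cases h0 : m 0 = 1
      · rw [if_pos h0, coeff_monomial, if_neg]
        intro h1
        rw [Dm_inj] at h1
        exact h (by rw [eq_Dm m, h0, show m 1 = j by omega])
      · rw [if_neg h0, coeff_zero]
  rw [Finset.sum_congr rfl this,
    sum_support_eq f₁ (Dm 1 j) (fun m => coeff m f₁ / ((j + 1 : ℕ) : ℂ)) (fun h => by simp [h])]

lemma gOf_coeff_succ (f₁ f₂ : A) (i j : ℕ) :
    coeff (Dm (i + 1) j) (gOf f₁ f₂)
      = coeff (Dm (i + 2) j) f₂ / (1 - ((i + 2 : ℕ) : ℂ)) := by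
  classical
  rw [gOf, coeff_add, MvPolynomial.coeff_sum, MvPolynomial.coeff_sum]
  rw [show (∑ m ∈ f₁.support, coeff (Dm (i+1) j)
      (if m 0 = 1 then monomial (Dm 0 (m 1 + 1)) (coeff m f₁ / ((m 1 + 1 : ℕ) : ℂ)) else 0)) = 0
    from Finset.sum_eq_zero fun m _ => by
      split_ifs with h
      · rw [coeff_monomial, if_neg (by rw [Dm_inj]; omega)]
      · simp, zero_add]
  have : ∀ m ∈ f₂.support,
      coeff (Dm (i+1) j) (if 2 ≤ m 0 then monomial (Dm (m 0 - 1) (m 1)) (coeff m f₂ / (1 - ((m 0 : ℕ) : ℂ))) else 0)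
        = if m = Dm (i + 2) j then coeff m f₂ / (1 - ((i + 2 : ℕ) : ℂ)) else 0 := by
    intro m _
    by_cases h : m = Dm (i + 2) j
    · subst h
      rw [if_pos (by rw [Dm_apply0]; omega), coeff_monomial,
        if_pos (by rw [Dm_inj, Dm_apply0, Dm_apply1]; omega), if_pos rfl, Dm_apply0]
    · rw [if_neg h]
      by_cases h0 : 2 ≤ m 0
      · rw [if_pos h0, coeff_monomial, if_neg]
        intro h1
        rw [Dm_inj] at h1
        exact h (by rw [eq_Dm m, show m 0 = i + 2 by omega, show m 1 = j by omega])
      · rw [if_neg h0, coeff_zero]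
  rw [Finset.sum_congr rfl this,
    sum_support_eq f₂ (Dm (i+2) j) (fun m => coeff m f₂ / (1 - ((i + 2 : ℕ) : ℂ)))
      (fun h => by simp [h])]
lemma Dm_add0 (i j : ℕ) : Dm i j + Finsupp.single 0 1 = Dm (i + 1) j := by
  ext x; fin_cases x <;> simp [Dm, Finsupp.single_apply]
lemma Dm_add1 (i j : ℕ) : Dm i j + Finsupp.single 1 1 = Dm i (j + 1) := by
  ext x; fin_cases x <;> simp [Dm, Finsupp.single_apply]

lemma coeff_X0_mul_succ (i j : ℕ) (q : A) :
    coeff (Dm (i + 1) j) (X 0 * q) = coeff (Dm i j) q := by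
  classical
  rw [MvPolynomial.coeff_X_mul' (Dm (i+1) j) 0 q]
  rw [if_pos (by simp [Finsupp.mem_support_iff, Dm_apply0])]
  congr 1
  have : Dm i j + Finsupp.single 0 1 = Dm (i+1) j := Dm_add0 i j
  rw [← this, add_tsub_cancel_right]

lemma coeff_X0_mul_zero (j : ℕ) (q : A) :
    coeff (Dm 0 j) (X 0 * q) = 0 := by
  classical
  rw [MvPolynomial.coeff_X_mul' (Dm 0 j) 0 q]
  rw [if_neg (by simp [Finsupp.mem_support_iff, Dm_apply0])]

lemma coeff_pderiv (k : Fin 2) (m : Fin 2 →₀ ℕ) (f : A) :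
    coeff m (pderiv k f) = ((m k + 1 : ℕ) : ℂ) * coeff (m + Finsupp.single k 1) f := by
  classical
  induction f using MvPolynomial.induction_on' with
  | monomial s a =>
    rw [pderiv_monomial, coeff_monomial, coeff_monomial]
    by_cases hs : s = m + Finsupp.single k 1
    · subst hs
      rw [if_pos (add_tsub_cancel_right _ _), if_pos rfl]
      push_cast [Finsupp.add_apply, Finsupp.single_apply]
      simp
      ring
    · rw [if_neg hs]
      split_ifs with h1
      · -- s - single k 1 = m but s ≠ m + single k 1, so s k = 0
        by_cases hk : s k = 0
        · simp [hk]
        · exfalso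
          apply hs
          rw [← h1, tsub_add_cancel_of_le]
          rwa [Finsupp.single_le_iff, Nat.one_le_iff_ne_zero]
      · simp
  | add p q hp hq => simp [hp, hq, mul_add]

lemma coeff_aeval_X1 (p : Polynomial ℂ) (i j : ℕ) :
    coeff (Dm i j) (Polynomial.aeval (X 1 : A) p) = if i = 0 then p.coeff j else 0 := by
  classical
  induction p using Polynomial.induction_on' with
  | monomial n c =>
    rw [Polynomial.aeval_monomial, X_pow_eq_monomial]
    have : (algebraMap ℂ A) c = C c := rfl
    rw [this, C_mul_monomial, mul_one, coeff_monomial]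
    have hsingle : Finsupp.single (1 : Fin 2) n = Dm 0 n := by
      ext x; fin_cases x <;> simp [Dm, Finsupp.single_apply]
    rw [hsingle, Polynomial.coeff_monomial]
    by_cases hi : i = 0
    · subst hi
      by_cases hj : n = j
      · subst hj; simp [Dm_inj]
      · rw [if_neg (by simp [Dm_inj, hj]), if_pos rfl, if_neg hj]
    · rw [if_neg (by simp [Dm_inj]; intro h; exact absurd h.symm hi), if_neg hi]
  | add p q hp hq => simp [hp, hq]; split_ifs <;> simp

lemma coeff_C' (c : ℂ) (i j : ℕ) :
    coeff (Dm i j) (C c : A) = if i = 0 ∧ j = 0 then c else 0 := by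
  classical
  rw [← MvPolynomial.monomial_zero']
  rw [coeff_monomial]
  have h0 : (0 : Fin 2 →₀ ℕ) = Dm 0 0 := by ext x; fin_cases x <;> simp [Dm]
  rw [h0]
  by_cases h : i = 0 ∧ j = 0
  · obtain ⟨rfl, rfl⟩ := h; simp
  · rw [if_neg (by simp [Dm_inj]; tauto), if_neg h]

lemma coeff_C_mul_X0 (c : ℂ) (i j : ℕ) :
    coeff (Dm i j) (C c * X 0 : A) = if i = 1 ∧ j = 0 then c else 0 := by
  classical
  rw [show (X 0 : A) = monomial (Finsupp.single 0 1) 1 from rfl, C_mul_monomial, mul_one,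
    coeff_monomial]
  have hsingle : Finsupp.single (0 : Fin 2) 1 = Dm 1 0 := by
    ext x; fin_cases x <;> simp [Dm, Finsupp.single_apply]
  rw [hsingle]
  by_cases h : i = 1 ∧ j = 0
  · obtain ⟨rfl, rfl⟩ := h; simp
  · rw [if_neg (by simp [Dm_inj]; tauto), if_neg h]
/-- For every cocycle `(f₁,f₂)` of the logarithmic Poisson complex of `{x,y} = x²`
(i.e. `x²·∂_x f₁ + x·∂_y f₂ − x·f₁ = 0`), there exist `g ∈ ℂ[x,y]` and a unique triple
`(p, a₀, a₁)` — a one-variable polynomial `p` and constants `a₀, a₁ ∈ ℂ` — such that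
`f₁ = x·∂_y g + p(y)` and `f₂ = −x²·∂_x g + P(y) + a₀ + a₁·x`, where `P` is the
antiderivative of `p` with zero constant term; hence the first logarithmic Poisson
cohomology `H¹_PS` of `{x,y} = x²` is isomorphic to `ℂ[y] ⊕ ℂ₁[x]`. -/
theorem H1_PS_xsq (f₁ f₂ : A)
    (h : X 0 ^ 2 * pderiv 0 f₁ + X 0 * pderiv 1 f₂ - X 0 * f₁ = 0) :
    ∃! t : Polynomial ℂ × ℂ × ℂ, ∃ (g : A) (P : Polynomial ℂ),
      P.derivative = t.1 ∧ P.coeff 0 = 0 ∧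
      f₁ = X 0 * pderiv 1 g + Polynomial.aeval (X 1 : A) t.1 ∧
      f₂ = -(X 0 ^ 2 * pderiv 0 g) + Polynomial.aeval (X 1 : A) P
            + C t.2.1 + C t.2.2 * X 0 := by
  classical
  have hsq : ∀ q : A, (X 0 : A) ^ 2 * q = X 0 * (X 0 * q) := fun q => by ring
  have key : ∀ i j : ℕ, ((i : ℕ) : ℂ) * coeff (Dm i j) f₁
      + ((j + 1 : ℕ) : ℂ) * coeff (Dm i (j + 1)) f₂ - coeff (Dm i j) f₁ = 0 := by
    intro i j
    have h0 := congrArg (coeff (Dm (i + 1) j)) h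
    rw [hsq] at h0
    simp only [coeff_add, coeff_sub, coeff_zero] at h0
    rw [coeff_X0_mul_succ, coeff_X0_mul_succ, coeff_X0_mul_succ,
      coeff_pderiv 1, Dm_apply1, Dm_add1] at h0
    cases i with
    | zero =>
      rw [coeff_X0_mul_zero] at h0
      push_cast at h0 ⊢
      linear_combination h0
    | succ i' =>
      rw [coeff_X0_mul_succ, coeff_pderiv 0, Dm_apply0, Dm_add0] at h0
      push_cast at h0 ⊢
      linear_combination h0
  refine ⟨(pOf f₁, coeff (Dm 0 0) f₂, coeff (Dm 1 0) f₂), ⟨gOf f₁ f₂, POf f₂, ?_, ?_, ?_, ?_⟩, ?_⟩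
  · -- derivative (POf f₂) = pOf f₁
    ext j
    rw [Polynomial.coeff_derivative, POf_coeff, pOf_coeff, if_neg (Nat.succ_ne_zero j)]
    have := key 0 j
    push_cast at this ⊢
    linear_combination this
  · rw [POf_coeff, if_pos rfl]
  · -- f₁ equation
    apply MvPolynomial.ext
    intro m
    rw [eq_Dm m]
    generalize m 0 = i
    generalize m 1 = j
    rw [coeff_add, coeff_aeval_X1, pOf_coeff]
    cases i with
    | zero => rw [coeff_X0_mul_zero, if_pos rfl, zero_add]
    | succ i' =>
      rw [coeff_X0_mul_succ, if_neg (Nat.succ_ne_zero i'), add_zero,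
        coeff_pderiv 1, Dm_apply1, Dm_add1]
      cases i' with
      | zero =>
        rw [gOf_coeff0]
        have hne : ((j : ℂ) + 1) ≠ 0 := by
          exact_mod_cast Nat.succ_ne_zero j
        push_cast
        rw [eq_comm, ← mul_div_assoc, mul_comm, mul_div_assoc, div_self hne, mul_one]
      | succ i'' =>
        rw [gOf_coeff_succ]
        have hne : (1 : ℂ) - ((i'' + 2 : ℕ) : ℂ) ≠ 0 :=
          sub_ne_zero_of_ne (by exact_mod_cast (by omega : (1 : ℕ) ≠ i'' + 2))
        have hk := key (i'' + 2) j
        rw [← mul_div_assoc, eq_comm, div_eq_iff hne]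
        push_cast at hk ⊢
        linear_combination hk
  · -- f₂ equation
    apply MvPolynomial.ext
    intro m
    rw [eq_Dm m]
    generalize m 0 = i
    generalize m 1 = j
    rw [coeff_add, coeff_add, coeff_add, coeff_neg, hsq, coeff_aeval_X1, POf_coeff,
      coeff_C', coeff_C_mul_X0]
    cases i with
    | zero =>
      rw [coeff_X0_mul_zero, neg_zero, if_pos rfl, zero_add,
        if_neg (by omega : ¬((0 : ℕ) = 1 ∧ j = 0)), add_zero]
      cases j with
      | zero => simp
      | succ j' =>
        rw [if_neg (Nat.succ_ne_zero j'), if_neg (by omega : ¬((0 : ℕ) = 0 ∧ j' + 1 = 0)),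
          add_zero]
    | succ i' =>
      rw [coeff_X0_mul_succ, if_neg (Nat.succ_ne_zero i'),
        if_neg (by omega : ¬(i' + 1 = 0 ∧ j = 0)), add_zero]
      cases i' with
      | zero =>
        rw [coeff_X0_mul_zero, neg_zero, zero_add, zero_add]
        cases j with
        | zero => simp
        | succ j' =>
          rw [if_neg (by omega : ¬((1 : ℕ) = 1 ∧ j' + 1 = 0))]
          have hk := key 1 j'
          have hne : ((j' : ℂ) + 1) ≠ 0 := by
            exact_mod_cast Nat.succ_ne_zero j'
          push_cast at hk
          have hz : ((j' : ℂ) + 1) * coeff (Dm 1 (j' + 1)) f₂ = 0 := by linear_combination hk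
          rcases mul_eq_zero.mp hz with hc | hc
          · exact absurd hc hne
          · simp [hc]
      | succ i'' =>
        rw [coeff_X0_mul_succ, coeff_pderiv 0, Dm_apply0, Dm_add0, gOf_coeff_succ,
          if_neg (by omega : ¬(i'' + 1 + 1 = 1 ∧ j = 0)), add_zero, add_zero]
        have hne : (1 : ℂ) - ((i'' + 2 : ℕ) : ℂ) ≠ 0 :=
          sub_ne_zero_of_ne (by exact_mod_cast (by omega : (1 : ℕ) ≠ i'' + 2))
        rw [← mul_div_assoc, ← neg_div, eq_comm, div_eq_iff hne]
        push_cast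
        ring
  · -- uniqueness
    rintro ⟨p', a0', a1'⟩ ⟨g', P', hPd, hP0, hf1, hf2⟩
    simp only [Prod.mk.injEq]
    refine ⟨?_, ?_, ?_⟩
    · ext j
      have := congrArg (coeff (Dm 0 j)) hf1
      rw [coeff_add, coeff_X0_mul_zero, coeff_aeval_X1, if_pos rfl, zero_add] at this
      rw [pOf_coeff, this]
    · have := congrArg (coeff (Dm 0 0)) hf2
      rw [coeff_add, coeff_add, coeff_add, coeff_neg, hsq, coeff_X0_mul_zero, neg_zero,
        coeff_aeval_X1, if_pos rfl, hP0, coeff_C', coeff_C_mul_X0,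
        if_pos ⟨rfl, rfl⟩, if_neg (by omega : ¬((0 : ℕ) = 1 ∧ (0 : ℕ) = 0))] at this
      rw [this]; ring
    · have := congrArg (coeff (Dm 1 0)) hf2
      rw [coeff_add, coeff_add, coeff_add, coeff_neg, hsq, coeff_X0_mul_succ,
        coeff_X0_mul_zero, neg_zero, coeff_aeval_X1,
        if_neg (by omega : ¬(1 = 0)), coeff_C', coeff_C_mul_X0,
        if_neg (by omega : ¬((1 : ℕ) = 0 ∧ (0 : ℕ) = 0)), if_pos ⟨rfl, rfl⟩] at this
      rw [this]; ring
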